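/- Suppose the parameter p satisfies the hypotheses of the s_π corollary: A, B_V, B_H ≠ 0 and B_H B_V λ_0 = A² p_0, where A = (λ_H+τ_H)(λ_V+τ_V) - τ_V τ_H, B_V = (p_H+p_V)(λ_V+τ_V) - p_V λ_V, B_H = (p_H+p_V)(λ_H+τ_H) - p_H λ_H. Set ν_H = A/B_H and ν_V = A/B_V, and define p̃ by λ̃_0 = λ_0, λ̃_V = ν_H p_V, λ̃_H = ν_V p_H, τ̃_V = (B_V/B_H)τ_H, τ̃_H = (B_H/B_V)τ_V, p̃_V = λ_V/ν_H, p̃_H = λ_H/ν_V, p̃_0 = p_0. Then the five conditions of the s_π theorem hold: (1) λ̃_H+τ̃_H = λ_H+τ_H and λ̃_V+τ̃_V = λ_V+τ_V; (2) λ̃_0 = λ_0 = ν_V ν_H p_0, λ̃_V = ν_H p_V, λ̃_H = ν_V p_H; (3) ν_V τ̃_V = ν_H τ_H and ν_H τ̃_H = ν_V τ_V; (4) ν_H p̃_V = λ_V, ν_V p̃_H = λ_H, p̃_0 = p_0; (5) p̃_V+p̃_H+p̃_0 = p_V+p_H+p_0. -/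

import Mathlib

theorem stmt_13 (l0 lV lH tV tH pV pH p0 : ℝ)
    (hl0 : 0 ≤ l0) (hlV : 0 ≤ lV) (hlH : 0 ≤ lH) (htV : 0 ≤ tV) (htH : 0 ≤ tH)
    (hpV : 0 ≤ pV) (hpV' : pV ≤ 1) (hpH : 0 ≤ pH) (hpH' : pH ≤ 1)
    (hp0 : 0 ≤ p0) (hp0' : p0 ≤ 1)
    (A BV BH : ℝ)
    (hA : A = (lH + tH) * (lV + tV) - tV * tH)
    (hBV : BV = (pH + pV) * (lV + tV) - pV * lV)
    (hBH : BH = (pH + pV) * (lH + tH) - pH * lH)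
    (hA0 : A ≠ 0) (hBV0 : BV ≠ 0) (hBH0 : BH ≠ 0)
    (hrev : BH * BV * l0 = A ^ 2 * p0)
    (νH νV : ℝ) (hνH : νH = A / BH) (hνV : νV = A / BV)
    (tl0 tlV tlH ttV ttH tpV tpH tp0 : ℝ)
    (h1 : tl0 = l0) (h2 : tlV = νH * pV) (h3 : tlH = νV * pH)
    (h4 : ttV = (BV / BH) * tH) (h5 : ttH = (BH / BV) * tV)
    (h6 : tpV = lV / νH) (h7 : tpH = lH / νV) (h8 : tp0 = p0) :
    (tlH + ttH = lH + tH ∧ tlV + ttV = lV + tV) ∧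
    (tl0 = l0 ∧ l0 = νV * νH * p0 ∧ tlV = νH * pV ∧ tlH = νV * pH) ∧
    (νV * ttV = νH * tH ∧ νH * ttH = νV * tV) ∧
    (νH * tpV = lV ∧ νV * tpH = lH ∧ tp0 = p0) ∧
    (tpV + tpH + tp0 = pV + pH + p0) := by
  have hνH0 : νH ≠ 0 := by rw [hνH]; exact div_ne_zero hA0 hBH0
  have hνV0 : νV ≠ 0 := by rw [hνV]; exact div_ne_zero hA0 hBV0
  subst h1 h2 h3 h4 h5 h6 h7 h8 hνH hνV
  refine ⟨⟨?_, ?_⟩, ⟨rfl, ?_, rfl, rfl⟩, ⟨?_, ?_⟩, ⟨?_, ?_, rfl⟩, ?_⟩ <;>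
    field_simp <;> subst hA hBV hBH <;> ring_nf
  all_goals nlinarith [hrev, sq_nonneg ((lH + tH) * (lV + tV) - tV * tH)]
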